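/- Let (V, Q) be an FBAS whose top tier T is symmetric with non-nested quorum set (T, ∅, t), where m = |T| and 1 ≤ t ≤ m; that is, T is the union of all minimal quorums of (V, Q) and for every v ∈ T, Q(v) = {q ⊆ V : v ∈ q and |q ∩ T| ≥ t}. Then every minimal blocking set of (V, Q) has cardinality exactly m − t + 1. -/
import Mathlib


open Finset

variable {α : Type*} [DecidableEq α]

/-- `U` is a quorum of the FBAS `(V, Q)`: a nonempty subset of `V` containing,
for every member `v`, some slice `q ∈ Q v` with `q ⊆ U`. -/
def IsQuorum (V : Finset α) (Q : α → Finset (Finset α)) (U : Finset α) : Prop :=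
  U ⊆ V ∧ U.Nonempty ∧ ∀ v ∈ U, ∃ q ∈ Q v, q ⊆ U

/-- A minimal quorum: a quorum none of whose proper subsets is a quorum. -/
def IsMinimalQuorum (V : Finset α) (Q : α → Finset (Finset α)) (U : Finset α) : Prop :=
  IsQuorum V Q U ∧ ∀ U' ⊂ U, ¬IsQuorum V Q U'

/-- A blocking set: a subset of `V` intersecting every quorum of `(V, Q)`. -/
def IsBlocking (V : Finset α) (Q : α → Finset (Finset α)) (B : Finset α) : Prop :=
  B ⊆ V ∧ ∀ U, IsQuorum V Q U → (B ∩ U).Nonempty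

/-- A minimal blocking set: a blocking set none of whose proper subsets is blocking. -/
def IsMinimalBlocking (V : Finset α) (Q : α → Finset (Finset α)) (B : Finset α) : Prop :=
  IsBlocking V Q B ∧ ∀ B' ⊂ B, ¬IsBlocking V Q B'

/-- A splitting set: a subset of `V` containing the intersection of two distinct quorums. -/
def IsSplitting (V : Finset α) (Q : α → Finset (Finset α)) (S : Finset α) : Prop :=
  S ⊆ V ∧ ∃ U₁ U₂, IsQuorum V Q U₁ ∧ IsQuorum V Q U₂ ∧ U₁ ≠ U₂ ∧ U₁ ∩ U₂ ⊆ S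

/-- A minimal splitting set: a splitting set none of whose proper subsets is splitting. -/
def IsMinimalSplitting (V : Finset α) (Q : α → Finset (Finset α)) (S : Finset α) : Prop :=
  IsSplitting V Q S ∧ ∀ S' ⊂ S, ¬IsSplitting V Q S'

/-- Well-formedness of an FBAS `(V, Q)`: every slice of every node `v ∈ V`
contains `v` and is a subset of `V`. -/
def WellFormed (V : Finset α) (Q : α → Finset (Finset α)) : Prop :=
  ∀ v ∈ V, ∀ q ∈ Q v, v ∈ q ∧ q ⊆ V

/-- `T` is the top tier of `(V, Q)`: the union of all minimal quorums. -/
def IsTopTier (V : Finset α) (Q : α → Finset (Finset α)) (T : Finset α) : Prop :=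
  ∀ v, v ∈ T ↔ ∃ U, IsMinimalQuorum V Q U ∧ v ∈ U

/-- `(V, Q)` enjoys quorum intersection: any two quorums share a node. -/
def QuorumIntersection (V : Finset α) (Q : α → Finset (Finset α)) : Prop :=
  ∀ U₁ U₂, IsQuorum V Q U₁ → IsQuorum V Q U₂ → (U₁ ∩ U₂).Nonempty

lemma exists_minimal_quorum_subset (V : Finset α) (Q : α → Finset (Finset α)) :
    ∀ U, IsQuorum V Q U → ∃ U', U' ⊆ U ∧ IsMinimalQuorum V Q U' := by
  intro U
  induction U using Finset.strongInduction with
  | _ U ih =>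
    intro hU
    by_cases h : ∀ U' ⊂ U, ¬IsQuorum V Q U'
    · exact ⟨U, Finset.Subset.refl U, hU, h⟩
    · push_neg at h
      obtain ⟨U', hsub, hq⟩ := h
      obtain ⟨W, hW, hWm⟩ := ih U' hsub hq
      exact ⟨W, hW.trans hsub.subset, hWm⟩

/-- in an FBAS with a symmetric top tier `T` with non-nested quorum
set `(T, ∅, t)` (with `1 ≤ t ≤ |T|`), every minimal blocking set has cardinality
exactly `|T| - t + 1`. -/
theorem symmetric_top_tier_minimal_blocking_card
    (V : Finset α) (Q : α → Finset (Finset α)) (hwf : WellFormed V Q)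
    (T : Finset α) (hT : IsTopTier V Q T)
    (t : ℕ) (ht1 : 1 ≤ t) (ht2 : t ≤ T.card)
    (hsym : ∀ v ∈ T, ∀ q : Finset α, q ∈ Q v ↔ (q ⊆ V ∧ v ∈ q ∧ t ≤ (q ∩ T).card)) :
    ∀ B, IsMinimalBlocking V Q B → B.card = T.card - t + 1 := by
  have hTV : T ⊆ V := by
    intro v hv
    obtain ⟨U, hU, hvU⟩ := (hT v).mp hv
    exact hU.1.1 hvU
  -- every quorum intersects T in at least t elements
  have hqT : ∀ U, IsQuorum V Q U → t ≤ (U ∩ T).card := by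
    intro U hU
    obtain ⟨U', hU'sub, hU'min⟩ := exists_minimal_quorum_subset V Q U hU
    have hU'T : U' ⊆ T := fun v hv => (hT v).mpr ⟨U', hU'min, hv⟩
    obtain ⟨v, hv⟩ := hU'min.1.2.1
    obtain ⟨q, hq, hqsub⟩ := hU'min.1.2.2 v hv
    have hqt := ((hsym v (hU'T hv) q).mp hq).2.2
    calc t ≤ (q ∩ T).card := hqt
      _ ≤ (U ∩ T).card := Finset.card_le_card
          (Finset.inter_subset_inter (hqsub.trans hU'sub) Finset.Subset.rfl)
  -- subsets of T of size at least t are quorums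
  have hsq : ∀ S : Finset α, S ⊆ T → t ≤ S.card → IsQuorum V Q S := by
    intro S hST htS
    refine ⟨hST.trans hTV, Finset.card_pos.mp (ht1.trans htS),
      fun v hv => ⟨S, ?_, Finset.Subset.rfl⟩⟩
    rw [hsym v (hST hv)]
    refine ⟨hST.trans hTV, hv, ?_⟩
    rwa [Finset.inter_eq_left.mpr hST]
  -- blocking characterization
  have hblock : ∀ B : Finset α, B ⊆ V →
      (IsBlocking V Q B ↔ T.card - t + 1 ≤ (B ∩ T).card) := by
    intro B hBV
    constructor
    · intro hB
      by_contra h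
      push_neg at h
      have h2 : t ≤ (T \ B).card := by
        have h3 := Finset.card_sdiff_add_card_inter T B
        have h4 : (T ∩ B).card = (B ∩ T).card := by rw [Finset.inter_comm]
        omega
      obtain ⟨x, hx⟩ := hB.2 _ (hsq (T \ B) (Finset.sdiff_subset) h2)
      rw [Finset.mem_inter, Finset.mem_sdiff] at hx
      exact hx.2.2 hx.1
    · intro h
      refine ⟨hBV, fun U hU => ?_⟩
      have hUt := hqT U hU
      have hcu : ((B ∩ T) ∪ (U ∩ T)).card ≤ T.card :=
        Finset.card_le_card
          (Finset.union_subset Finset.inter_subset_right Finset.inter_subset_right)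
      have hcai := Finset.card_union_add_card_inter (B ∩ T) (U ∩ T)
      have hpos : 0 < ((B ∩ T) ∩ (U ∩ T)).card := by omega
      obtain ⟨x, hx⟩ := Finset.card_pos.mp hpos
      rw [Finset.mem_inter, Finset.mem_inter, Finset.mem_inter] at hx
      exact ⟨x, Finset.mem_inter.mpr ⟨hx.1.1, hx.2.1⟩⟩
  rintro B ⟨hB, hmin⟩
  have hBT : B ⊆ T := by
    by_contra h
    have hss : B ∩ T ⊂ B := by
      refine Finset.ssubset_iff_subset_ne.mpr ⟨Finset.inter_subset_left, ?_⟩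
      intro heq
      exact h (by rw [← heq]; exact Finset.inter_subset_right)
    refine hmin (B ∩ T) hss ?_
    refine (hblock (B ∩ T) (Finset.inter_subset_right.trans hTV)).mpr ?_
    have : (B ∩ T) ∩ T = B ∩ T := by
      rw [Finset.inter_assoc, Finset.inter_self]
    rw [this]
    exact (hblock B hB.1).mp hB
  have hcard : T.card - t + 1 ≤ B.card := by
    have := (hblock B hB.1).mp hB
    rwa [Finset.inter_eq_left.mpr hBT] at this
  refine le_antisymm ?_ hcard
  by_contra h
  push_neg at h
  obtain ⟨x, hx⟩ := Finset.card_pos.mp (by omega : 0 < B.card)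
  refine hmin (B.erase x) (Finset.erase_ssubset hx) ?_
  refine (hblock (B.erase x) ((Finset.erase_subset x B).trans hB.1)).mpr ?_
  have hsub : B.erase x ⊆ T := (Finset.erase_subset x B).trans hBT
  rw [Finset.inter_eq_left.mpr hsub, Finset.card_erase_of_mem hx]
  omega
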